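/- Let X be a κ-step subshift of Q^M, let A be a subset of M, and let p and p' be two patterns in X_{A^{+2κ}} such that p↾_{∂_{2κ}⁺A} = p'↾_{∂_{2κ}⁺A}. Then there are two points x and x' of X such that x↾_{A^{+2κ}} = p, x'↾_{A^{+2κ}} = p', and x↾_{M∖A} = x'↾_{M∖A}. -/

import Mathlib

open Filter Set

namespace GoE

variable {G M Q : Type*}

/-- A left homogeneous space `⟨M, G, ▷⟩` together with a coordinate system
`⟨m₀, (g_{m₀,m})_{m∈M}⟩`: a cell space with finite stabiliser `G₀` of `m₀`. -/
structure CellSpace (G M : Type*) [Group G] where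
  act : G → M → M
  one_act : ∀ m : M, act 1 m = m
  mul_act : ∀ (g h : G) (m : M), act (g * h) m = act g (act h m)
  transitive : ∀ m m' : M, ∃ g : G, act g m = m'
  m0 : M
  coord : M → G
  coord_act : ∀ m : M, act (coord m) m0 = m
  stab_finite : {g : G | act g m0 = m0}.Finite

variable [Group G]

namespace CellSpace

/-- Membership in the stabiliser `G₀` of `m₀`. -/
def stab (R : CellSpace G M) (g : G) : Prop := R.act g R.m0 = R.m0

/-- The induced right semi-action `m ↝ gG₀ = g_{m₀,m} g ▷ m₀`, on representatives. -/
def sAct (R : CellSpace G M) (m : M) (g : G) : M := R.act (R.coord m * g) R.m0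

/-- `m ↝ ι n` where `ι : M → G/G₀`, `n ↦ G_{m₀,n}` is the canonical identification. -/
def nAct (R : CellSpace G M) (m n : M) : M := R.act (R.coord m * R.coord n) R.m0

/-- `S ⊆ G` represents a finite symmetric right generating set of cosets
(`G₀ · S ⊆ S`, `S⁻¹ ⊆ S`, and `S` generates). -/
structure IsRightGenSet (R : CellSpace G M) (S : Set G) : Prop where
  finite : S.Finite
  saturated : ∀ s ∈ S, ∀ g₀ : G, R.stab g₀ → s * g₀ ∈ S
  stab_mul : ∀ g₀ : G, R.stab g₀ → ∀ s ∈ S, g₀ * s ∈ S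
  symm : ∀ s ∈ S, s⁻¹ ∈ S
  generates : ∀ m : M, ∃ (k : ℕ) (f : ℕ → M), f 0 = R.m0 ∧ f k = m ∧
    ∀ i < k, ∃ s ∈ S, f (i + 1) = R.sAct (f i) s

/-- There is an `S`-path of length `n` from `m` to `m'` in the `S`-Cayley graph. -/
def Chain (R : CellSpace G M) (S : Set G) (m m' : M) (n : ℕ) : Prop :=
  ∃ f : ℕ → M, f 0 = m ∧ f n = m' ∧ ∀ i < n, ∃ s ∈ S, f (i + 1) = R.sAct (f i) s

/-- The `S`-metric `d`. -/
noncomputable def dist (R : CellSpace G M) (S : Set G) (m m' : M) : ℕ :=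
  sInf {n : ℕ | R.Chain S m m' n}

/-- The ball `B(m, ρ)` of radius `ρ` centred at `m`. -/
noncomputable def ball (R : CellSpace G M) (S : Set G) (m : M) (ρ : ℕ) : Set M :=
  {m' : M | R.dist S m m' ≤ ρ}

/-- The `θ`-interior `A^{-θ}` of `A`. -/
noncomputable def inter (R : CellSpace G M) (S : Set G) (A : Set M) (θ : ℕ) : Set M :=
  {m ∈ A | R.ball S m θ ⊆ A}

/-- The `θ`-closure `A^{+θ}` of `A`. -/
noncomputable def clos (R : CellSpace G M) (S : Set G) (A : Set M) (θ : ℕ) : Set M :=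
  {m : M | (R.ball S m θ ∩ A).Nonempty}

/-- The external `θ`-boundary `∂θ⁺A = A^{+θ} ∖ A`. -/
noncomputable def extB (R : CellSpace G M) (S : Set G) (A : Set M) (θ : ℕ) : Set M :=
  R.clos S A θ \ A

/-- The internal `θ`-boundary `∂θ⁻A = A ∖ A^{-θ}`. -/
noncomputable def intB (R : CellSpace G M) (S : Set G) (A : Set M) (θ : ℕ) : Set M :=
  A \ R.inter S A θ

/-- The `θ`-boundary `∂θA = A^{+θ} ∖ A^{-θ}`. -/
noncomputable def bdry (R : CellSpace G M) (S : Set G) (A : Set M) (θ : ℕ) : Set M :=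
  R.clos S A θ \ R.inter S A θ

end CellSpace

/-- The set `X_A` of restrictions to `A` of the elements of `X`. -/
def restr (A : Set M) (X : Set (M → Q)) : Set (A → Q) :=
  (fun x : M → Q => A.restrict x) '' X

/-- The pattern `p` (with domain `A`) semi-occurs in the configuration `c`:
there is `h ∈ H` with `h ⊛ p = c↾_{h ▷ dom p}`. -/
def SemiOccurs (R : CellSpace G M) (H : Subgroup G) {A : Set M} (p : A → Q)
    (c : M → Q) : Prop :=
  ∃ h ∈ H, ∀ a : A, c (R.act h ↑a) = p a

/-- The pattern `p` (with domain `A`) occurs at `t` in the configuration `c`: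
`t ⊛' p = c↾_{t ↝ A}`. -/
def OccursAt (R : CellSpace G M) {A : Set M} (p : A → Q) (t : M) (c : M → Q) : Prop :=
  ∀ a : A, c (R.nAct t ↑a) = p a

/-- The pattern `p` is allowed in `X`: it semi-occurs in some point of `X`. -/
def Allowed (R : CellSpace G M) (H : Subgroup G) (X : Set (M → Q)) {A : Set M}
    (p : A → Q) : Prop :=
  ∃ x ∈ X, SemiOccurs R H p x

/-- The set `⟨𝔉⟩` generated by a set `𝔉` of forbidden patterns. -/
def Generated (R : CellSpace G M) (H : Subgroup G) (𝔉 : Set (Σ A : Set M, A → Q)) :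
    Set (M → Q) :=
  {c : M → Q | ∀ f ∈ 𝔉, ¬ SemiOccurs R H f.2 c}

/-- `X` is a subshift of `Q^M`: it is generated by a set of blocks. -/
def IsSubshift (R : CellSpace G M) (H : Subgroup G) (X : Set (M → Q)) : Prop :=
  ∃ 𝔉 : Set (Σ A : Set M, A → Q), (∀ f ∈ 𝔉, f.1.Finite) ∧ X = Generated R H 𝔉

/-- `X` is a subshift of finite type: it is generated by a finite set of blocks. -/
def IsSubshiftFT (R : CellSpace G M) (H : Subgroup G) (X : Set (M → Q)) : Prop :=
  ∃ 𝔉 : Set (Σ A : Set M, A → Q), 𝔉.Finite ∧ (∀ f ∈ 𝔉, f.1.Finite) ∧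
    X = Generated R H 𝔉

/-- `X` is a `κ`-step subshift: it is generated by a set of `B(κ)`-blocks. -/
def IsStep (R : CellSpace G M) (S : Set G) (H : Subgroup G) (X : Set (M → Q))
    (κ : ℕ) : Prop :=
  ∃ 𝔉 : Set (Σ A : Set M, A → Q), (∀ f ∈ 𝔉, f.1 = R.ball S R.m0 κ) ∧
    X = Generated R H 𝔉

/-- `X` is `κ`-strongly irreducible. -/
def IsStronglyIrr (R : CellSpace G M) (S : Set G) (H : Subgroup G)
    (X : Set (M → Q)) (κ : ℕ) : Prop :=
  ∀ (A B : Set M), A.Finite → B.Finite → ∀ (p : A → Q) (p' : B → Q),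
    Allowed R H X p → Allowed R H X p' →
    (∀ a ∈ A, ∀ b ∈ B, κ + 1 ≤ R.dist S a b) →
    ∃ x ∈ X, A.restrict x = p ∧ B.restrict x = p'

/-- `X` has `ρ`-bounded propagation. -/
def HasBoundedProp (R : CellSpace G M) (S : Set G) (X : Set (M → Q)) (ρ : ℕ) : Prop :=
  ∀ F : Set M, F.Finite → ∀ p : F → Q,
    (∀ f ∈ F, ∃ x ∈ X, ∀ (m : M) (hm : m ∈ R.ball S f ρ ∩ F), p ⟨m, hm.2⟩ = x m) →
    ∃ x ∈ X, F.restrict x = p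

/-- `Δ` is a `κ`-local map from `X` to `Y`. -/
def IsLocalMap (R : CellSpace G M) (S : Set G) (H : Subgroup G)
    (X Y : Set (M → Q)) (Δ : (M → Q) → (M → Q)) (κ : ℕ) : Prop :=
  Set.MapsTo Δ X Y ∧
  ∃ N : Set M, N ⊆ R.ball S R.m0 κ ∧
    (∀ g₀ : G, R.stab g₀ → ∀ n ∈ N, R.act g₀ n ∈ N) ∧
    ∃ δ : (N → Q) → Q,
      (∀ h₀ ∈ H, R.stab h₀ →
        ∀ ℓ ∈ restr N X, ∀ ℓ' : N → Q,
          (∀ (n : M) (hn : n ∈ N) (hn' : R.act h₀⁻¹ n ∈ N),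
            ℓ' ⟨n, hn⟩ = ℓ ⟨R.act h₀⁻¹ n, hn'⟩) →
          δ ℓ' = δ ℓ) ∧
      ∀ x ∈ X, ∀ m : M, Δ x m = δ (fun n : N => x (R.nAct m ↑n))

/-- `Δ` is pre-injective on `X`. -/
def PreInjective (X : Set (M → Q)) (Δ : (M → Q) → (M → Q)) : Prop :=
  ∀ x ∈ X, ∀ x' ∈ X, Δ x = Δ x' → {m : M | x m ≠ x' m}.Finite → x = x'

/-- The cell space `R` is right amenable: there is a finitely additive probability
measure on the power set of `M` that is semi-invariant under the right semi-action. -/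
def RightAmenable (R : CellSpace G M) : Prop :=
  ∃ μ : Set M → ℝ, (∀ A : Set M, 0 ≤ μ A) ∧ μ Set.univ = 1 ∧
    (∀ A B : Set M, Disjoint A B → μ (A ∪ B) = μ A + μ B) ∧
    ∀ (g : G) (A : Set M), Set.InjOn (fun m => R.sAct m g) A →
      μ ((fun m => R.sAct m g) '' A) = μ A

/-- `F` is a right Følner net in `R` (indexed by the directed set `I`). -/
def IsFolnerNet (R : CellSpace G M) (S : Set G) {I : Type*} [Preorder I]
    (F : I → Set M) : Prop :=
  (∀ i, (F i).Nonempty) ∧ (∀ i, (F i).Finite) ∧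
  ∀ ρ : ℕ, Tendsto (fun i => ((R.bdry S (F i) ρ).ncard : ℝ) / ((F i).ncard : ℝ))
    atTop (nhds 0)

/-- The entropy of `X ⊆ Q^M` with respect to the net `F`:
`limsup_i log|X_{F_i}| / |F_i|`. -/
noncomputable def entropy (R : CellSpace G M) (S : Set G) {I : Type*} [Preorder I]
    (F : I → Set M) (X : Set (M → Q)) : ℝ :=
  limsup (fun i => Real.log ((restr (F i) X).ncard : ℝ) / ((F i).ncard : ℝ)) atTop

/-- `T` is a `⟨θ, κ, θ'⟩`-tiling of `R`. -/
def IsTiling (R : CellSpace G M) (S : Set G) (θ κ θ' : ℕ) (T : Set M) : Prop :=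
  (∀ t ∈ T, ∀ t' ∈ T, t ≠ t' →
    ∀ a ∈ R.ball S t θ, ∀ b ∈ R.ball S t' θ, κ + 1 ≤ R.dist S a b) ∧
  ∀ m : M, ∃ t ∈ T, m ∈ R.ball S t θ'

/-- The action `h ⊛ c` of `h ∈ G` on configurations: `(h ⊛ c)(m) = c(h⁻¹ ▷ m)`. -/
def shiftAct (R : CellSpace G M) (h : G) (c : M → Q) : M → Q :=
  fun m => c (R.act h⁻¹ m)

section Aux

variable [Group G] (R : CellSpace G M)

lemma aux_act_inv_act (g : G) (m : M) : R.act g⁻¹ (R.act g m) = m := by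
  rw [← R.mul_act, inv_mul_cancel, R.one_act]

lemma aux_stab_inv {g : G} (h : R.stab g) : R.stab g⁻¹ := by
  have h2 := aux_act_inv_act R g R.m0
  unfold CellSpace.stab at *
  rwa [h] at h2

lemma aux_coord_inv (m : M) : R.act (R.coord m)⁻¹ m = R.m0 := by
  have h := aux_act_inv_act R (R.coord m) R.m0
  rwa [R.coord_act] at h

lemma aux_step_map {S : Set G} (hS : R.IsRightGenSet S) (g : G) {m : M} {s : G}
    (hs : s ∈ S) : ∃ s' ∈ S, R.act g (R.sAct m s) = R.sAct (R.act g m) s' := by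
  set g₀ := (R.coord (R.act g m))⁻¹ * (g * R.coord m) with hg₀
  have hst : R.stab g₀ := by
    unfold CellSpace.stab
    rw [hg₀, R.mul_act, R.mul_act, R.coord_act]
    exact aux_coord_inv R (R.act g m)
  refine ⟨g₀ * s, hS.stab_mul g₀ hst s hs, ?_⟩
  show R.act g (R.act (R.coord m * s) R.m0) = R.act (R.coord (R.act g m) * (g₀ * s)) R.m0
  have he : R.coord (R.act g m) * (g₀ * s) = g * (R.coord m * s) := by
    rw [hg₀]; group
  rw [he]
  exact (R.mul_act g (R.coord m * s) R.m0).symm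

lemma aux_step_rev {S : Set G} (hS : R.IsRightGenSet S) {m : M} {s : G}
    (hs : s ∈ S) : ∃ s' ∈ S, m = R.sAct (R.sAct m s) s' := by
  set g₀ := (R.coord m * s)⁻¹ * R.coord (R.sAct m s) with hg₀
  have hst : R.stab g₀ := by
    unfold CellSpace.stab
    rw [hg₀, R.mul_act, R.coord_act]
    show R.act (R.coord m * s)⁻¹ (R.act (R.coord m * s) R.m0) = R.m0
    exact aux_act_inv_act R _ _
  refine ⟨g₀⁻¹ * s⁻¹, hS.stab_mul g₀⁻¹ (aux_stab_inv R hst) s⁻¹ (hS.symm s hs), ?_⟩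
  show m = R.act (R.coord (R.sAct m s) * (g₀⁻¹ * s⁻¹)) R.m0
  have he : R.coord (R.sAct m s) * (g₀⁻¹ * s⁻¹) = R.coord m := by
    rw [hg₀]; group
  rw [he, R.coord_act]

lemma aux_chain_map {S : Set G} (hS : R.IsRightGenSet S) (g : G) {m m' : M} {n : ℕ}
    (h : R.Chain S m m' n) : R.Chain S (R.act g m) (R.act g m') n := by
  obtain ⟨f, h0, hn, hstep⟩ := h
  refine ⟨fun i => R.act g (f i), by simp only [h0], by simp only [hn], fun i hi => ?_⟩
  obtain ⟨s, hs, he⟩ := hstep i hi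
  obtain ⟨s', hs', he'⟩ := aux_step_map R hS g hs (m := f i)
  refine ⟨s', hs', ?_⟩
  show R.act g (f (i + 1)) = R.sAct (R.act g (f i)) s'
  rw [he, he']

lemma aux_chain_symm {S : Set G} (hS : R.IsRightGenSet S) {m m' : M} {n : ℕ}
    (h : R.Chain S m m' n) : R.Chain S m' m n := by
  obtain ⟨f, h0, hn, hstep⟩ := h
  refine ⟨fun i => f (n - i), by simpa using hn, by simpa using h0, fun i hi => ?_⟩
  obtain ⟨s, hs, he⟩ := hstep (n - i - 1) (by omega)
  obtain ⟨s', hs', he'⟩ := aux_step_rev R hS hs (m := f (n - i - 1))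
  refine ⟨s', hs', ?_⟩
  show f (n - (i + 1)) = R.sAct (f (n - i)) s'
  have g1 : f (n - (i + 1)) = f (n - i - 1) := congrArg f (by omega)
  have g2 : f (n - i) = f (n - i - 1 + 1) := congrArg f (by omega)
  rw [g1, g2, he]
  exact he'

lemma aux_chain_trans {S : Set G} {m m' m'' : M} {n k : ℕ}
    (h1 : R.Chain S m m' n) (h2 : R.Chain S m' m'' k) : R.Chain S m m'' (n + k) := by
  obtain ⟨f, hf0, hfn, hfstep⟩ := h1
  obtain ⟨g, hg0, hgk, hgstep⟩ := h2
  refine ⟨fun i => if i ≤ n then f i else g (i - n), ?_, ?_, ?_⟩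
  · simp [hf0]
  · have key : ∀ i, n ≤ i → i ≤ n + k → (if i ≤ n then f i else g (i - n)) = g (i - n) := by
      intro i hni hik
      by_cases h : i ≤ n
      · have : i = n := le_antisymm h hni
        simp [h, this, hfn, hg0]
      · simp [h]
    show (if n + k ≤ n then f (n + k) else g (n + k - n)) = m''
    rw [key (n + k) (by omega) le_rfl]
    simpa using hgk
  · intro i hi
    by_cases hc : i + 1 ≤ n
    · obtain ⟨s, hs, he⟩ := hfstep i (by omega)
      refine ⟨s, hs, ?_⟩
      show (if i + 1 ≤ n then f (i + 1) else g (i + 1 - n)) =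
        R.sAct (if i ≤ n then f i else g (i - n)) s
      rw [if_pos hc, if_pos (by omega : i ≤ n)]
      exact he
    · have hni : n ≤ i := by omega
      obtain ⟨s, hs, he⟩ := hgstep (i - n) (by omega)
      refine ⟨s, hs, ?_⟩
      have e1 : i + 1 - n = i - n + 1 := by omega
      have key : ∀ j, n ≤ j → (if j ≤ n then f j else g (j - n)) = g (j - n) := by
        intro j hnj
        by_cases h : j ≤ n
        · have : j = n := le_antisymm h hnj
          simp [h, this, hfn, hg0]
        · simp [h]
      show (if i + 1 ≤ n then f (i + 1) else g (i + 1 - n)) =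
        R.sAct (if i ≤ n then f i else g (i - n)) s
      rw [key (i + 1) (by omega), key i hni, e1, he]

lemma aux_chain_exists {S : Set G} (hS : R.IsRightGenSet S) (m m' : M) :
    ∃ n, R.Chain S m m' n := by
  obtain ⟨k, f, h0, hk, hstep⟩ := hS.generates m
  obtain ⟨k', f', h0', hk', hstep'⟩ := hS.generates m'
  have c1 : R.Chain S R.m0 m k := ⟨f, h0, hk, hstep⟩
  have c2 : R.Chain S R.m0 m' k' := ⟨f', h0', hk', hstep'⟩
  exact ⟨k + k', aux_chain_trans R (aux_chain_symm R hS c1) c2⟩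

lemma aux_dist_le_iff {S : Set G} (hS : R.IsRightGenSet S) {m m' : M} {k : ℕ} :
    R.dist S m m' ≤ k ↔ ∃ n ≤ k, R.Chain S m m' n := by
  constructor
  · intro h
    have hne : {n | R.Chain S m m' n}.Nonempty := aux_chain_exists R hS m m'
    exact ⟨_, h, Nat.sInf_mem hne⟩
  · rintro ⟨n, hn, hc⟩
    exact le_trans (Nat.sInf_le hc) hn

end Aux

theorem stmt5
    [Finite Q] (R : CellSpace G M) (S : Set G) (hS : R.IsRightGenSet S)
    (H : Subgroup G) (hH : ∀ m : M, R.coord m ∈ H)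
    (X : Set (M → Q)) (κ : ℕ) (hX : IsSubshift R H X) (hstep : IsStep R S H X κ)
    (A : Set M) (p p' : (R.clos S A (2 * κ) : Set M) → Q)
    (hp : p ∈ restr (R.clos S A (2 * κ)) X)
    (hp' : p' ∈ restr (R.clos S A (2 * κ)) X)
    (hagree : ∀ (m : M) (hm : m ∈ R.clos S A (2 * κ)), m ∉ A →
      p ⟨m, hm⟩ = p' ⟨m, hm⟩) :
    ∃ x ∈ X, ∃ x' ∈ X,
      Set.restrict (R.clos S A (2 * κ)) x = p ∧
      Set.restrict (R.clos S A (2 * κ)) x' = p' ∧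
      ∀ m : M, m ∉ A → x m = x' m := by
  classical
  obtain ⟨𝔉, hdom, hXeq⟩ := hstep
  obtain ⟨x, hxX, hxp⟩ := hp
  obtain ⟨y, hyX, hyp⟩ := hp'
  set x' : M → Q := fun m => if m ∈ A then y m else x m with hx'def
  have hchain0 : ∀ m : M, R.Chain S m m 0 := fun m => ⟨fun _ => m, rfl, rfl, by omega⟩
  have hAclos : A ⊆ R.clos S A (2 * κ) := by
    intro m hm
    exact ⟨m, (aux_dist_le_iff R hS).2 ⟨0, by omega, hchain0 m⟩, hm⟩
  have hx'X : x' ∈ X := by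
    rw [hXeq]
    rw [hXeq] at hxX hyX
    rintro f hf ⟨h, hhH, hocc⟩
    by_cases hc : ∃ a : (f.1 : Set M), R.act h ↑a ∈ A
    · obtain ⟨a₀, ha₀⟩ := hc
      apply hyX f hf
      refine ⟨h, hhH, fun a => ?_⟩
      rw [← hocc a]
      by_cases hmA : R.act h ↑a ∈ A
      · simp [hx'def, hmA]
      · have hdκ : ∀ b ∈ f.1, R.dist S R.m0 b ≤ κ := by
          intro b hb
          rw [hdom f hf] at hb
          exact hb
        obtain ⟨n₁, hn₁, c₁⟩ := (aux_dist_le_iff R hS).1 (hdκ ↑a a.2)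
        obtain ⟨n₂, hn₂, c₂⟩ := (aux_dist_le_iff R hS).1 (hdκ ↑a₀ a₀.2)
        have cc : R.Chain S (↑a) (↑a₀) (n₁ + n₂) :=
          aux_chain_trans R (aux_chain_symm R hS c₁) c₂
        have ccmap := aux_chain_map R hS h cc
        have hdist : R.dist S (R.act h ↑a) (R.act h ↑a₀) ≤ 2 * κ :=
          (aux_dist_le_iff R hS).2 ⟨n₁ + n₂, by omega, ccmap⟩
        have hmem : R.act h ↑a ∈ R.clos S A (2 * κ) := ⟨R.act h ↑a₀, hdist, ha₀⟩
        have h1 : x' (R.act h ↑a) = x (R.act h ↑a) := by simp [hx'def, hmA]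
        have h2 : x (R.act h ↑a) = p ⟨_, hmem⟩ := (congrFun hxp ⟨_, hmem⟩ : _)
        have h3 : y (R.act h ↑a) = p' ⟨_, hmem⟩ := (congrFun hyp ⟨_, hmem⟩ : _)
        rw [h3, ← hagree _ hmem hmA, ← h2, ← h1]
    · push_neg at hc
      apply hxX f hf
      refine ⟨h, hhH, fun a => ?_⟩
      rw [← hocc a]
      simp [hx'def, hc a]
  refine ⟨x, hxX, x', hx'X, hxp, ?_, ?_⟩
  · funext a
    by_cases hmA : (↑a : M) ∈ A
    · have : y ↑a = p' a := (congrFun hyp a : _)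
      simpa [hx'def, hmA, Set.restrict, Set.domRestrict] using this
    · have h2 : x ↑a = p a := (congrFun hxp a : _)
      have := hagree ↑a a.2 hmA
      simp only [Set.restrict, Set.domRestrict, hx'def, if_neg hmA]
      rw [h2, this]
  · intro m hm
    simp [hx'def, hm]


end GoE
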